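/- arXiv:2009.04159 — 3 statements merged into one kernel-verified Lean document; each statement's English description precedes it below -/
import Mathlib

section
/- For all integers q ≥ 2 and t ≥ 4, every minimal q-Ramsey graph for the cycle C_t has minimum degree at least q+1; equivalently, no minimal q-Ramsey graph for C_t contains a vertex of degree at most q. -/
open SimpleGraph

/-- The edge set `S` (over vertex type `V`) contains a copy of `H`:
there is an injective map sending edges of `H` into `S`. -/
def EdgeSetContains {W V : Type*} (H : SimpleGraph W) (S : Set (Sym2 V)) : Prop :=
  ∃ f : W → V, Function.Injective f ∧ ∀ a b : W, H.Adj a b → s(f a, f b) ∈ S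

/-- The graph `G` contains a subgraph isomorphic to `H`. -/
def ContainsCopy {W V : Type*} (H : SimpleGraph W) (G : SimpleGraph V) : Prop :=
  ∃ f : W → V, Function.Injective f ∧ ∀ a b : W, H.Adj a b → G.Adj (f a) (f b)

/-- A `q`-coloring `c` of the edges of `G` is `H`-free: no color class contains
a monochromatic subgraph isomorphic to `H`. -/
def IsHFree {W V : Type*} (H : SimpleGraph W) (G : SimpleGraph V) {q : ℕ}
    (c : Sym2 V → Fin q) : Prop :=
  ∀ i : Fin q, ¬ EdgeSetContains H {e | e ∈ G.edgeSet ∧ c e = i}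

/-- `G` is `q`-Ramsey for `H`: every `q`-coloring of the edges of `G` contains a
monochromatic copy of `H`. -/
def IsRamseyFor (q : ℕ) {W V : Type*} (H : SimpleGraph W) (G : SimpleGraph V) : Prop :=
  ∀ c : Sym2 V → Fin q, ¬ IsHFree H G c

/-- `G` is minimal `q`-Ramsey for `H`: it is `q`-Ramsey for `H` and no proper
subgraph of `G` is `q`-Ramsey for `H`. -/
def IsMinRamseyFor (q : ℕ) {W V : Type*} (H : SimpleGraph W) (G : SimpleGraph V) : Prop :=
  IsRamseyFor q H G ∧ ∀ G' : G.Subgraph, G' ≠ ⊤ → ¬ IsRamseyFor q H G'.coe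

/-- The degree of a vertex. -/
noncomputable def DegOf {V : Type*} (G : SimpleGraph V) (v : V) : ℕ :=
  (G.neighborSet v).ncard

/-- The minimum degree of a graph. -/
noncomputable def MinDegOf {V : Type*} (G : SimpleGraph V) : ℕ :=
  sInf (Set.range (DegOf G))

/-- `sRamsey q H` is the parameter `s_q(H)`: the smallest minimum degree of a
minimal `q`-Ramsey graph for `H`. -/
noncomputable def sRamsey (q : ℕ) {W : Type*} (H : SimpleGraph W) : ℕ :=
  sInf {d | ∃ (n : ℕ) (G : SimpleGraph (Fin n)), IsMinRamseyFor q H G ∧ MinDegOf G = d}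

/-- The `q`-color Ramsey number of `H`: the least `n` such that `K_n` is
`q`-Ramsey for `H`. -/
noncomputable def ramseyNumber (q : ℕ) {W : Type*} (H : SimpleGraph W) : ℕ :=
  sInf {n | IsRamseyFor q H (completeGraph (Fin n))}

/-- `H` is `s_q`-abundant: for every `k ≥ 1` there is a minimal `q`-Ramsey graph
for `H` with at least `k` vertices of degree `s_q(H)`. -/
def SAbundant (q : ℕ) {W : Type*} (H : SimpleGraph W) : Prop :=
  ∀ k : ℕ, 1 ≤ k → ∃ (n : ℕ) (G : SimpleGraph (Fin n)),
    IsMinRamseyFor q H G ∧ k ≤ {v | DegOf G v = sRamsey q H}.ncard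

/-- A graph is 3-connected if it has more than 3 vertices and removing any at
most 2 vertices leaves it connected. -/
def ThreeConnected {W : Type*} (H : SimpleGraph W) : Prop :=
  3 < Nat.card W ∧ ∀ s : Set W, s.ncard ≤ 2 → (SimpleGraph.induce (sᶜ) H).Connected

/-- The (unordered) color pattern induced by a coloring `c` on the graph `G`:
the set of its color classes on `E(G)`. -/
def PatternOf {V : Type*} (G : SimpleGraph V) {q : ℕ}
    (c : Sym2 V → Fin q) : Set (Set (Sym2 V)) :=
  Set.range fun i : Fin q => {e | e ∈ G.edgeSet ∧ c e = i}

/-- `P` is a `q`-color pattern for `G`: a partition of `E(G)` into the color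
classes of some `q`-coloring. -/
def IsPattern {V : Type*} (G : SimpleGraph V) (q : ℕ) (P : Set (Set (Sym2 V))) : Prop :=
  ∃ c : Sym2 V → Fin q, P = PatternOf G c

/-- A pattern is `H`-free if no part contains a copy of `H`. -/
def IsHFreePattern {W V : Type*} (H : SimpleGraph W) (P : Set (Set (Sym2 V))) : Prop :=
  ∀ S ∈ P, ¬ EdgeSetContains H S

/-- The pair `(P, V₀)` is `H`-robust: in any graph `P'` obtained from `P` by adding a set `S`
of new vertices and any collection of edges within `S ∪ V₀`, every copy of `H` is entirely
contained either in `P` or in the subgraph induced by `S ∪ V₀`. -/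
def HRobust {W U : Type*} (H : SimpleGraph W) (P : SimpleGraph U) (V₀ : Set U) : Prop :=
  ∀ (S : Type) (P' : SimpleGraph (U ⊕ S)),
    (∀ a b : U, P.Adj a b → P'.Adj (Sum.inl a) (Sum.inl b)) →
    (∀ a b : U, P'.Adj (Sum.inl a) (Sum.inl b) → P.Adj a b ∨ (a ∈ V₀ ∧ b ∈ V₀)) →
    (∀ (s : S) (a : U), P'.Adj (Sum.inr s) (Sum.inl a) → a ∈ V₀) →
    ∀ f : W → U ⊕ S, Function.Injective f →
      (∀ a b : W, H.Adj a b → P'.Adj (f a) (f b)) →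
      (∃ g : W → U, (∀ w, f w = Sum.inl (g w)) ∧
        ∀ a b : W, H.Adj a b → P.Adj (g a) (g b)) ∨
      (∀ w : W, (∃ a ∈ V₀, f w = Sum.inl a) ∨ ∃ s : S, f w = Sum.inr s)

/-- The graph `K_t · K_2`: a clique on `t` vertices (the vertices `< t`) together with a
pendant vertex (the vertex `t`) attached to the clique vertex `0`. -/
def cliquePendant (t : ℕ) : SimpleGraph (Fin (t + 1)) :=
  SimpleGraph.fromRel fun a b => (a.val < t ∧ b.val < t) ∨ (a.val = t ∧ b.val = 0)

/-- The graph obtained from the cycle `C_k` by attaching a distinct pendant vertex to each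
cycle vertex. -/
def sunGraph (k : ℕ) : SimpleGraph (Fin k ⊕ Fin k) :=
  SimpleGraph.fromRel fun a b =>
    match a, b with
    | Sum.inl i, Sum.inl j => (SimpleGraph.cycleGraph k).Adj i j
    | Sum.inl i, Sum.inr j => i = j
    | _, _ => False


/-- For all `q ≥ 2` and `t ≥ 4`, every minimal `q`-Ramsey graph for `C_t`
has minimum degree at least `q + 1`, i.e. no vertex has degree at most `q`. -/
theorem min_ramsey_cycle_min_degree (q t : ℕ) (hq : 2 ≤ q) (ht : 4 ≤ t)
    {V : Type} [Fintype V] (G : SimpleGraph V)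
    (hG : IsMinRamseyFor q (cycleGraph t) G) :
    ∀ v : V, q + 1 ≤ DegOf G v := by
  classical
  obtain ⟨n, rfl⟩ : ∃ n, t = n + 2 + 2 := ⟨t - 4, by omega⟩
  intro v
  by_contra hdeg
  push_neg at hdeg
  have hd : DegOf G v ≤ q := Nat.lt_succ_iff.mp hdeg
  -- an injection from the neighbors of `v` into the colors
  obtain ⟨e⟩ : Nonempty (↥(G.neighborSet v) ↪ Fin q) := by
    apply Function.Embedding.nonempty_of_card_le
    rw [Fintype.card_fin]
    calc Fintype.card ↥(G.neighborSet v) = (G.neighborSet v).ncard := by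
          rw [← Nat.card_eq_fintype_card, Nat.card_coe_set_eq]
      _ ≤ q := hd
  set col : V → Fin q := fun u =>
    if h : u ∈ G.neighborSet v then e ⟨u, h⟩ else ⟨0, by omega⟩ with hcolDef
  have colinj : ∀ a b, a ∈ G.neighborSet v → b ∈ G.neighborSet v → col a = col b → a = b := by
    intro a b ha hb hab
    simp only [hcolDef, dif_pos ha, dif_pos hb] at hab
    exact Subtype.mk_eq_mk.mp (e.injective hab)
  -- the subgraph obtained by deleting `v`
  set G' : G.Subgraph := (⊤ : G.Subgraph).deleteVerts {v} with hG'Def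
  have hvG' : v ∉ G'.verts := by
    simp [hG'Def]
  have hmem : ∀ a : V, a ≠ v → a ∈ G'.verts := by
    intro a ha
    simp [hG'Def, ha]
  have hne : G' ≠ ⊤ := by
    intro h
    exact hvG' (h ▸ (by simp : v ∈ (⊤ : G.Subgraph).verts))
  have hNR := hG.2 G' hne
  rw [IsRamseyFor] at hNR
  push_neg at hNR
  obtain ⟨c', hc'⟩ := hNR
  -- extend the coloring to all of `G`
  set k : V → V → Fin q := fun a b =>
    if ha : a = v then col b
    else if hb : b = v then col a
    else c' s(⟨a, hmem a ha⟩, ⟨b, hmem b hb⟩) with hkDef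
  have hksymm : ∀ a b, k a b = k b a := by
    intro a b
    rcases eq_or_ne a v with ha | ha <;> rcases eq_or_ne b v with hb | hb <;>
      simp only [hkDef, ha, hb, dif_pos, dite_eq_ite, if_true, dif_neg, not_false_iff]
    · rw [Sym2.eq_swap]
  set c : Sym2 V → Fin q := Sym2.lift ⟨k, hksymm⟩ with hcDef
  have hclift : ∀ a b : V, c s(a, b) = k a b := fun a b => Sym2.lift_mk _ a b
  apply hG.1 c
  intro i hi
  obtain ⟨f, finj, hf⟩ := hi
  by_cases hv : ∃ w, f w = v
  · -- the copy of the cycle uses `v`: two edges at `v` of the same color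
    obtain ⟨w, hw⟩ := hv
    have adj1 : (cycleGraph (n + 2 + 2)).Adj w (w + 1) := by
      rw [cycleGraph_adj]; right; abel
    have adj2 : (cycleGraph (n + 2 + 2)).Adj w (w - 1) := by
      rw [cycleGraph_adj]; left; abel
    obtain ⟨he1, hc1⟩ := hf w (w + 1) adj1
    obtain ⟨he2, hc2⟩ := hf w (w - 1) adj2
    have hn1 : f (w + 1) ∈ G.neighborSet v := by
      have := G.mem_edgeSet.mp he1
      rwa [hw] at this
    have hn2 : f (w - 1) ∈ G.neighborSet v := by
      have := G.mem_edgeSet.mp he2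
      rwa [hw] at this
    have hcol1 : col (f (w + 1)) = i := by
      rw [hw, hclift] at hc1
      simpa only [hkDef, dif_pos, dite_eq_ite, if_true] using hc1
    have hcol2 : col (f (w - 1)) = i := by
      rw [hw, hclift] at hc2
      simpa only [hkDef, dif_pos, dite_eq_ite, if_true] using hc2
    have heq : f (w + 1) = f (w - 1) :=
      colinj _ _ hn1 hn2 (hcol1.trans hcol2.symm)
    have heqw : w + 1 = w - 1 := finj heq
    have h2 : (2 : Fin (n + 2 + 2)) = 0 := by
      calc (2 : Fin (n + 2 + 2)) = (w + 1) - (w - 1) := by abel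
        _ = 0 := by rw [heqw, sub_self]
    simp [Fin.ext_iff] at h2
    rw [Nat.mod_eq_of_lt (by omega)] at h2; omega
  · -- the copy of the cycle avoids `v`: it is a copy in `G - v`, contradiction
    push_neg at hv
    apply hc' i
    refine ⟨fun w => ⟨f w, hmem (f w) (hv w)⟩, ?_, ?_⟩
    · intro a b hab
      exact finj (congrArg Subtype.val hab)
    · intro a b hab
      obtain ⟨he, hcc⟩ := hf a b hab
      constructor
      · exact G'.coe.mem_edgeSet.mpr
          (SimpleGraph.Subgraph.deleteVerts_adj.mpr
            ⟨trivial, by simpa using hv a, trivial, by simpa using hv b,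
              G.mem_edgeSet.mp he⟩)
      · rw [hclift] at hcc
        simp only [hkDef, dif_neg (hv a), dif_neg (hv b)] at hcc
        exact hcc
end

section
/- For all integers q ≥ 2 and t ≥ 3, there exists a K_t-free coloring of the edges of the complete graph K_{(t−1)^q} with q colors that cannot be extended to a K_t-free q-coloring of K_{(t−1)^q + 1}; that is, every q-coloring of the edges of the complete graph on (t−1)^q + 1 vertices whose restriction to the complete graph on some fixed set of (t−1)^q of these vertices agrees with the given coloring contains a monochromatic copy of K_t. -/
open SimpleGraph

section Aux

variable {q m : ℕ}

/-- The index of the first coordinate where `x` and `y` differ (or `0` if `x = y`). -/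
noncomputable def fdiff (hq : 0 < q) (x y : Fin q → Fin m) : Fin q :=
  if h : x = y then ⟨0, hq⟩
  else (Finset.filter (fun i => x i ≠ y i) Finset.univ).min'
    (by obtain ⟨i, hi⟩ := Function.ne_iff.mp h; exact ⟨i, by simp [hi]⟩)

lemma fdiff_comm (hq : 0 < q) (x y : Fin q → Fin m) : fdiff hq x y = fdiff hq y x := by
  by_cases h : x = y
  · simp [fdiff, h]
  · have h' : y ≠ x := fun e => h e.symm
    rw [fdiff, fdiff, dif_neg h, dif_neg h']
    refine le_antisymm ?_ ?_ <;>
      refine Finset.le_min' _ _ _ (fun i hi => Finset.min'_le _ _ ?_) <;>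
      · simp only [Finset.mem_filter, Finset.mem_univ, true_and] at hi ⊢
        exact fun e => hi e.symm

lemma fdiff_spec1 (hq : 0 < q) {x y : Fin q → Fin m} (h : x ≠ y) :
    x (fdiff hq x y) ≠ y (fdiff hq x y) := by
  have := Finset.min'_mem (Finset.filter (fun i => x i ≠ y i) Finset.univ)
    (by obtain ⟨i, hi⟩ := Function.ne_iff.mp h; exact ⟨i, by simp [hi]⟩)
  rw [Finset.mem_filter] at this
  simpa [fdiff, dif_neg h] using this.2

lemma fdiff_spec2 (hq : 0 < q) {x y : Fin q → Fin m} (h : x ≠ y) {j : Fin q}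
    (hj : j < fdiff hq x y) : x j = y j := by
  by_contra hne
  have hmem : j ∈ Finset.filter (fun i => x i ≠ y i) Finset.univ := by simp [hne]
  have := Finset.min'_le _ _ hmem
  rw [show (Finset.filter (fun i => x i ≠ y i) Finset.univ).min'
      (by obtain ⟨i, hi⟩ := Function.ne_iff.mp h; exact ⟨i, by simp [hi]⟩) = fdiff hq x y
    from by rw [fdiff, dif_neg h]] at this
  exact absurd hj (not_lt.mpr this)

lemma fdiff_eq (hq : 0 < q) {x y : Fin q → Fin m} {i : Fin q}
    (hne : x i ≠ y i) (hlt : ∀ j : Fin q, j < i → x j = y j) : fdiff hq x y = i := by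
  have h : x ≠ y := fun e => hne (by rw [e])
  refine le_antisymm ?_ ?_
  · have hmem : i ∈ Finset.filter (fun j => x j ≠ y j) Finset.univ := by simp [hne]
    have := Finset.min'_le _ _ hmem
    rwa [show (Finset.filter (fun j => x j ≠ y j) Finset.univ).min'
        (by obtain ⟨j, hj⟩ := Function.ne_iff.mp h; exact ⟨j, by simp [hj]⟩) = fdiff hq x y
      from by rw [fdiff, dif_neg h]] at this
  · by_contra hc
    exact fdiff_spec1 hq h (hlt _ (not_le.mp hc))

end Aux

/-- For all `q ≥ 2` and `t ≥ 3`, there is a `K_t`-free `q`-coloring of the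
edges of `K_{(t-1)^q}` that cannot be extended to a `K_t`-free `q`-coloring of
`K_{(t-1)^q + 1}`: every `q`-coloring of the complete graph on `(t-1)^q + 1` vertices
agreeing with it on the first `(t-1)^q` vertices contains a monochromatic copy of `K_t`. -/
theorem unextendable_Kt_free_coloring (q t : ℕ) (hq : 2 ≤ q) (ht : 3 ≤ t) :
    ∃ c : Sym2 (Fin ((t - 1) ^ q)) → Fin q,
      IsHFree (completeGraph (Fin t)) (completeGraph (Fin ((t - 1) ^ q))) c ∧
      ∀ c' : Sym2 (Fin ((t - 1) ^ q + 1)) → Fin q,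
        (∀ a b : Fin ((t - 1) ^ q), c' s(a.castSucc, b.castSucc) = c s(a, b)) →
        ¬ IsHFree (completeGraph (Fin t)) (completeGraph (Fin ((t - 1) ^ q + 1))) c' := by
  have hq0 : 0 < q := by omega
  have hm0 : 0 < t - 1 := by omega
  set n := (t - 1) ^ q with hn
  have hcard : Fintype.card (Fin q → Fin (t - 1)) = n := by
    simp [hn, Fintype.card_fun]
  let e : (Fin q → Fin (t - 1)) ≃ Fin n := Fintype.equivFinOfCardEq hcard
  let c : Sym2 (Fin n) → Fin q :=
    Sym2.lift ⟨fun a b => fdiff hq0 (e.symm a) (e.symm b), fun a b => fdiff_comm hq0 _ _⟩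
  have hc : ∀ x y : Fin q → Fin (t - 1), c s(e x, e y) = fdiff hq0 x y := by
    intro x y; simp [c]
  refine ⟨c, ?_, ?_⟩
  · -- K_t-freeness of c
    rintro i ⟨f, hinj, hadj⟩
    have hkey : Function.Injective fun a : Fin t => e.symm (f a) i := by
      intro a b hab
      simp only at hab
      by_contra hne
      obtain ⟨hmem, hcol⟩ := hadj a b (by simp [completeGraph, hne])
      have hxy : e.symm (f a) ≠ e.symm (f b) :=
        fun h => hne (hinj (e.symm.injective h))
      have hcc : c s(f a, f b) = fdiff hq0 (e.symm (f a)) (e.symm (f b)) := by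
        simp [c]
      rw [hcc] at hcol
      have := fdiff_spec1 hq0 hxy
      rw [hcol] at this
      exact this hab
    have := Fintype.card_le_of_injective _ hkey
    simp at this
    omega
  · -- unextendability
    intro c' hagree hfree
    set w : Fin (n + 1) := Fin.last n with hw
    let col' : (Fin q → Fin (t - 1)) → Fin q := fun x => c' s(w, (e x).castSucc)
    -- old edges of c' are given by fdiff
    have hold : ∀ x y : Fin q → Fin (t - 1),
        c' s((e x).castSucc, (e y).castSucc) = fdiff hq0 x y := by
      intro x y; rw [hagree, hc]
    -- main induction
    have main : ∀ k : ℕ, k ≤ q → ∃ p : Fin q → Fin (t - 1),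
        ∀ x : Fin q → Fin (t - 1), (∀ j : Fin q, (j : ℕ) < k → x j = p j) →
          k ≤ (col' x : ℕ) := by
      intro k
      induction k with
      | zero => exact fun _ => ⟨fun _ => ⟨0, hm0⟩, fun x _ => Nat.zero_le _⟩
      | succ k ih =>
        intro hk1
        obtain ⟨p, hp⟩ := ih (by omega)
        have hkq : k < q := hk1
        set K : Fin q := ⟨k, hkq⟩ with hK
        -- find a good value v at coordinate k
        have hgood : ∃ v : Fin (t - 1), ∀ x : Fin q → Fin (t - 1),
            (∀ j : Fin q, (j : ℕ) < k → x j = p j) → x K = v → col' x ≠ K := by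
          by_contra hbad
          push_neg at hbad
          choose X hX1 hX2 hX3 using hbad
          -- build a monochromatic K_t in color K
          have hXK : ∀ v, X v K = v := hX2
          have hXinj : Function.Injective X := by
            intro a b hab
            have := hXK a; rw [hab, hXK b] at this; exact this.symm
          let f : Fin t → Fin (n + 1) := fun a =>
            if h : (a : ℕ) < t - 1 then ((e (X ⟨a, h⟩)).castSucc) else w
          have hfinj : Function.Injective f := by
            intro a b hab
            simp only [f] at hab
            by_cases ha : (a : ℕ) < t - 1 <;> by_cases hb : (b : ℕ) < t - 1
            · rw [dif_pos ha, dif_pos hb] at hab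
              have := hXinj (e.injective (Fin.castSucc_injective _ hab))
              exact Fin.ext (by simpa using congrArg Fin.val this)
            · rw [dif_pos ha, dif_neg hb] at hab
              exact absurd hab (Fin.ne_last_of_lt (Fin.castSucc_lt_last _))
            · rw [dif_neg ha, dif_pos hb] at hab
              exact absurd hab.symm (Fin.ne_last_of_lt (Fin.castSucc_lt_last _))
            · have : (a : ℕ) = t - 1 := by omega
              have hb' : (b : ℕ) = t - 1 := by omega
              exact Fin.ext (by omega)
          have hcolXX : ∀ u v : Fin (t - 1), u ≠ v → fdiff hq0 (X u) (X v) = K := by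
            intro u v huv
            refine fdiff_eq hq0 ?_ ?_
            · rw [hXK, hXK]; exact huv
            · intro j hj
              have hj' : (j : ℕ) < k := hj
              rw [hX1 u j hj', hX1 v j hj']
          refine hfree K ⟨f, hfinj, ?_⟩
          intro a b hab
          have hab' : a ≠ b := by
            simp only [completeGraph, top_adj] at hab; exact hab
          refine ⟨by simpa using hfinj.ne hab', ?_⟩
          by_cases ha : (a : ℕ) < t - 1 <;> by_cases hb : (b : ℕ) < t - 1
          · have huv : (⟨(a : ℕ), ha⟩ : Fin (t - 1)) ≠ ⟨b, hb⟩ := by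
              intro h; exact hab' (Fin.ext (by simpa using congrArg Fin.val h))
            simp only [f, dif_pos ha, dif_pos hb]
            rw [hold]; exact hcolXX _ _ huv
          · simp only [f, dif_pos ha, dif_neg hb]
            rw [Sym2.eq_swap]
            exact hX3 ⟨a, ha⟩
          · simp only [f, dif_neg ha, dif_pos hb]
            exact hX3 ⟨b, hb⟩
          · exact absurd (Fin.ext (by omega : (a : ℕ) = (b : ℕ))) hab'
        obtain ⟨v, hv⟩ := hgood
        refine ⟨Function.update p K v, ?_⟩
        intro x hx
        have hxk : ∀ j : Fin q, (j : ℕ) < k → x j = p j := by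
          intro j hj
          have hne : j ≠ K := by intro h; rw [h] at hj; simp [hK] at hj
          rw [hx j (by omega), Function.update_of_ne hne]
        have hxK : x K = v := by
          rw [hx K (by simp [hK]), Function.update_self]
        have h1 : k ≤ (col' x : ℕ) := hp x hxk
        have h2 : col' x ≠ K := hv x hxk hxK
        have h3 : (col' x : ℕ) ≠ k := by
          intro h; exact h2 (Fin.ext (by simp [hK, h]))
        omega
    obtain ⟨p, hp⟩ := main q le_rfl
    have := hp p (fun _ _ => rfl)
    have := (col' p).isLt
    omega
end

section
/- Let q ≥ 2 be an integer and let H be a graph with no isolated vertices and at least one edge. Then every minimal q-Ramsey graph G for H satisfies δ(G) ≥ q(δ(H)−1)+1, where δ denotes minimum degree; in particular, s_q(H) ≥ q(δ(H)−1)+1. -/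
open SimpleGraph

/-- Multicolour Ramsey theorem for cliques, formulated with finsets. -/
lemma clique_ramsey_aux (q : ℕ) (hq : 0 < q) :
    ∀ (N : ℕ) (t : Fin q → ℕ), (∑ i, t i) = N →
    ∃ n : ℕ, ∀ c : Sym2 (Fin n) → Fin q,
      ∃ (i : Fin q) (A : Finset (Fin n)),
        t i ≤ A.card ∧ ∀ x ∈ A, ∀ y ∈ A, x ≠ y → c s(x, y) = i := by
  intro N
  induction N using Nat.strong_induction_on with
  | _ N ih =>
    intro t ht
    by_cases h0 : ∃ i, t i = 0
    · obtain ⟨i, hi⟩ := h0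
      exact ⟨0, fun c => ⟨i, ∅, by simp [hi], by simp⟩⟩
    · push_neg at h0
      have hpos : ∀ i, 1 ≤ t i := fun i => Nat.one_le_iff_ne_zero.mpr (h0 i)
      -- N ≥ 1
      have hN : 1 ≤ N := by
        have : (1 : ℕ) ≤ ∑ i, t i := le_trans (hpos ⟨0, hq⟩) (Finset.single_le_sum (fun i _ => Nat.zero_le _) (Finset.mem_univ _))
        omega
      have key : ∀ i : Fin q, ∃ n : ℕ, ∀ c : Sym2 (Fin n) → Fin q,
          ∃ (j : Fin q) (A : Finset (Fin n)),
            Function.update t i (t i - 1) j ≤ A.card ∧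
            ∀ x ∈ A, ∀ y ∈ A, x ≠ y → c s(x, y) = j := by
        intro i
        apply ih (N - 1) (by omega)
        rw [Finset.sum_update_of_mem (Finset.mem_univ i)]
        have := hpos i
        have hsum : t i + ∑ j ∈ Finset.univ \ {i}, t j = N := by
          rw [← ht, Finset.sum_eq_add_sum_sdiff_singleton_of_mem (Finset.mem_univ i)]
        omega
      choose n hn using key
      set nn := 1 + ∑ i, n i with hnn
      refine ⟨nn, ?_⟩
      intro c
      have hv : 0 < nn := by omega
      set v : Fin nn := ⟨0, hv⟩ with hvdef
      set D : Fin q → Finset (Fin nn) :=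
        fun i => (Finset.univ.erase v).filter (fun x => c s(v, x) = i) with hD
      have hcard : ∑ i, (D i).card = ∑ i, n i := by
        rw [← Finset.card_eq_sum_card_fiberwise (f := fun x => c s(v, x))
          (fun x _ => Finset.mem_univ _)]
        simp [Finset.card_erase_of_mem, hnn]
      have hex : ∃ i, n i ≤ (D i).card := by
        by_contra hcon
        push_neg at hcon
        have : ∑ i, (D i).card < ∑ i, n i :=
          Finset.sum_lt_sum_of_nonempty (by simp [Finset.univ_nonempty_iff]; exact ⟨⟨0, hq⟩⟩)
            (fun i _ => hcon i)
        omega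
      obtain ⟨i, hi⟩ := hex
      -- embed Fin (n i) into D i
      have hcards : Fintype.card (Fin (n i)) ≤ Fintype.card ↥(D i) := by
        simpa using hi
      obtain ⟨φ⟩ := Function.Embedding.nonempty_of_card_le hcards
      set ψ : Fin (n i) → Fin nn := fun k => ((φ k : ↥(D i)) : Fin nn) with hψ
      have hψinj : Function.Injective ψ := fun a b h => φ.injective (Subtype.ext h)
      have hψmem : ∀ k, ψ k ∈ D i := fun k => (φ k).2
      obtain ⟨j, B, hB, hBmono⟩ := hn i (fun s => c (Sym2.map ψ s))
      set B' : Finset (Fin nn) := B.image ψ with hB'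
      have hB'card : B'.card = B.card := Finset.card_image_of_injective _ hψinj
      have hB'mono : ∀ x ∈ B', ∀ y ∈ B', x ≠ y → c s(x, y) = j := by
        intro x hx y hy hxy
        obtain ⟨a, ha, rfl⟩ := Finset.mem_image.mp hx
        obtain ⟨b, hb, rfl⟩ := Finset.mem_image.mp hy
        have hab : a ≠ b := fun h => hxy (by rw [h])
        have := hBmono a ha b hb hab
        simpa [Sym2.map_pair_eq] using this
      by_cases hji : j = i
      · subst hji
        refine ⟨j, insert v B', ?_, ?_⟩
        · have hvB' : v ∉ B' := by
            intro hv'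
            obtain ⟨a, _, ha⟩ := Finset.mem_image.mp hv'
            have := hψmem a
            rw [ha] at this
            exact (Finset.mem_erase.mp (Finset.mem_filter.mp this).1).1 rfl
          rw [Finset.card_insert_of_notMem hvB', hB'card]
          have := hpos j
          have h2 : Function.update t j (t j - 1) j ≤ B.card := hB
          rw [Function.update_self] at h2
          omega
        · intro x hx y hy hxy
          rcases Finset.mem_insert.mp hx with rfl | hx'
          · rcases Finset.mem_insert.mp hy with rfl | hy'
            · exact absurd rfl hxy
            · obtain ⟨b, hb, rfl⟩ := Finset.mem_image.mp hy'
              exact (Finset.mem_filter.mp (hψmem b)).2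
          · rcases Finset.mem_insert.mp hy with rfl | hy'
            · obtain ⟨a, ha, rfl⟩ := Finset.mem_image.mp hx'
              rw [Sym2.eq_swap]
              exact (Finset.mem_filter.mp (hψmem a)).2
            · exact hB'mono x hx' y hy' hxy
      · refine ⟨j, B', ?_, hB'mono⟩
        rw [hB'card]
        have h2 : Function.update t i (t i - 1) j ≤ B.card := hB
        rwa [Function.update_of_ne hji] at h2

lemma ramsey_transfer {q : ℕ} {W V₁ V₂ : Type*} {H : SimpleGraph W}
    {G₁ : SimpleGraph V₁} {G₂ : SimpleGraph V₂} (e : V₁ → V₂)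
    (he : Function.Injective e)
    (hadj : ∀ a b, G₁.Adj a b ↔ G₂.Adj (e a) (e b))
    (hR : IsRamseyFor q H G₁) : IsRamseyFor q H G₂ := by
  intro c₂ hfree
  apply hR (fun s => c₂ (Sym2.map e s))
  intro i ⟨f, hf, hcopy⟩
  apply hfree i
  refine ⟨e ∘ f, he.comp hf, ?_⟩
  intro a b hab
  obtain ⟨hmem, hcol⟩ := hcopy a b hab
  constructor
  · rw [mem_edgeSet] at hmem ⊢
    exact (hadj _ _).mp hmem
  · simpa [Sym2.map_pair_eq] using hcol

lemma exists_complete_ramsey (q : ℕ) (hq : 0 < q) {W : Type} [Fintype W]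
    (H : SimpleGraph W) :
    ∃ n : ℕ, IsRamseyFor q H (completeGraph (Fin n)) := by
  have := clique_ramsey_aux q hq (∑ i : Fin q, Fintype.card W) (fun _ => Fintype.card W) rfl
  obtain ⟨n, hn⟩ := this
  refine ⟨n, ?_⟩
  intro c hfree
  obtain ⟨i, A, hA, hmono⟩ := hn c
  have hcards : Fintype.card W ≤ Fintype.card ↥A := by simpa using hA
  obtain ⟨φ⟩ := Function.Embedding.nonempty_of_card_le hcards
  apply hfree i
  refine ⟨fun w => (φ w : Fin n), fun a b h => φ.injective (Subtype.ext h), ?_⟩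
  intro a b hab
  have hne : (φ a : Fin n) ≠ (φ b : Fin n) :=
    fun h => hab.ne (φ.injective (Subtype.ext h))
  exact ⟨by simpa [completeGraph] using hne, hmono _ (φ a).2 _ (φ b).2 hne⟩

lemma exists_min_ramsey (q : ℕ) (hq : 0 < q) {W : Type} [Fintype W]
    (H : SimpleGraph W) :
    ∃ (n : ℕ) (G : SimpleGraph (Fin n)), IsMinRamseyFor q H G := by
  classical
  set T : Set ℕ := {n | ∃ G : SimpleGraph (Fin n), IsRamseyFor q H G} with hT
  have hTne : T.Nonempty := by
    obtain ⟨n, hn⟩ := exists_complete_ramsey q hq H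
    exact ⟨n, ⟨_, hn⟩⟩
  set n₀ := sInf T with hn₀
  obtain ⟨G₀, hG₀⟩ : ∃ G : SimpleGraph (Fin n₀), IsRamseyFor q H G := Nat.sInf_mem hTne
  set E : Set ℕ := {k | ∃ G : SimpleGraph (Fin n₀), IsRamseyFor q H G ∧ G.edgeSet.ncard = k}
    with hE
  have hEne : E.Nonempty := ⟨_, G₀, hG₀, rfl⟩
  obtain ⟨G, hG, hGcard⟩ : ∃ G : SimpleGraph (Fin n₀), IsRamseyFor q H G ∧
      G.edgeSet.ncard = sInf E := Nat.sInf_mem hEne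
  refine ⟨n₀, G, hG, ?_⟩
  intro G' hne hR
  by_cases hverts : G'.verts = Set.univ
  · -- same vertex set, fewer edges
    have hlt : ∃ x y, G.Adj x y ∧ ¬ G'.Adj x y := by
      by_contra hcon
      push_neg at hcon
      apply hne
      ext x y
      · simp [hverts]
      · exact ⟨fun h => G'.adj_sub h, fun h => hcon x y h⟩
    obtain ⟨x, y, hxy, hxy'⟩ := hlt
    have hRs : IsRamseyFor q H G'.spanningCoe := by
      refine ramsey_transfer (fun a : ↥G'.verts => (a : Fin n₀)) Subtype.val_injective ?_ hR
      intro a b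
      simp [SimpleGraph.Subgraph.spanningCoe]
    have hsub : G'.spanningCoe.edgeSet ⊂ G.edgeSet := by
      constructor
      · intro e he
        induction e with
        | _ a b => exact G'.adj_sub he
      · intro hsup
        have : s(x, y) ∈ G.edgeSet := by rwa [SimpleGraph.mem_edgeSet]
        have := hsup this
        rw [SimpleGraph.mem_edgeSet] at this
        exact hxy' this
    have hlt2 : G'.spanningCoe.edgeSet.ncard < G.edgeSet.ncard :=
      Set.ncard_lt_ncard hsub (Set.toFinite _)
    have : G'.spanningCoe.edgeSet.ncard ∈ E := ⟨_, hRs, rfl⟩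
    have := Nat.sInf_le this
    omega
  · -- smaller vertex set
    obtain ⟨m, ⟨e⟩⟩ := Finite.exists_equiv_fin ↥G'.verts
    set G₂ : SimpleGraph (Fin m) := SimpleGraph.comap (⇑e.symm) G'.coe with hG₂
    have hR₂ : IsRamseyFor q H G₂ := by
      refine ramsey_transfer (⇑e) e.injective ?_ hR
      intro a b
      simp [hG₂, SimpleGraph.comap]
    have hmem : m ∈ T := ⟨G₂, hR₂⟩
    have hle := Nat.sInf_le hmem
    have hmlt : m < n₀ := by
      have h1 : Nat.card ↥G'.verts = m := by
        rw [Nat.card_eq_of_equiv_fin e]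
      have h2 : G'.verts.ncard < (Set.univ : Set (Fin n₀)).ncard := by
        apply Set.ncard_lt_ncard _ Set.finite_univ
        exact Set.ssubset_univ_iff.mpr hverts
      have h3 : (Set.univ : Set (Fin n₀)).ncard = n₀ := by
        simp [Set.ncard_univ, Nat.card_eq_fintype_card]
      have h4 : G'.verts.ncard = Nat.card ↥G'.verts := (Nat.card_coe_set_eq _).symm
      omega
    omega

lemma deg_bound (q : ℕ) (hq : 2 ≤ q) {W : Type} [Fintype W] (H : SimpleGraph W)
    (hIso : ∀ w : W, 0 < DegOf H w) (hEdge : H.edgeSet.Nonempty)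
    {V : Type} [Fintype V] (G : SimpleGraph V) (hmin : IsMinRamseyFor q H G) :
    q * (MinDegOf H - 1) + 1 ≤ MinDegOf G := by
  classical
  obtain ⟨e0, he0⟩ := hEdge
  obtain ⟨wa, wb, hWadj⟩ : ∃ a b : W, H.Adj a b := by
    induction e0 with
    | _ a b => exact ⟨a, b, he0⟩
  have hWne : Nonempty W := ⟨wa⟩
  have hδH : 1 ≤ MinDegOf H := by
    obtain ⟨w₀, hw₀⟩ : MinDegOf H ∈ Set.range (DegOf H) :=
      Nat.sInf_mem (Set.range_nonempty _)
    rw [← hw₀]; exact hIso w₀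
  set d := MinDegOf H - 1 with hd
  clear_value d
  by_contra hcon
  push_neg at hcon
  have hq0 : 0 < q := by omega
  -- G has an edge
  obtain ⟨x, y, hGxy⟩ : ∃ x y : V, G.Adj x y := by
    have h := hmin.1 (fun _ => ⟨0, hq0⟩)
    unfold IsHFree at h
    push_neg at h
    obtain ⟨i, f, finj, hf⟩ := h
    have := (hf wa wb hWadj).1
    rw [SimpleGraph.mem_edgeSet] at this
    exact ⟨_, _, this⟩
  have hVne : Nonempty V := ⟨x⟩
  obtain ⟨v, hv⟩ : ∃ v : V, DegOf G v = MinDegOf G := by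
    have := Nat.sInf_mem (Set.range_nonempty (DegOf G))
    exact this
  set N := G.neighborSet v with hN
  have hNcard : N.ncard ≤ q * d := by
    have : DegOf G v ≤ q * d := by rw [hv]; exact Nat.lt_succ_iff.mp hcon
    exact this
  -- the other vertex
  have hu₀ : (if x = v then y else x) ≠ v := by
    by_cases hx : x = v
    · simp only [if_pos hx]
      intro h; rw [← hx] at h; exact hGxy.ne' (h.symm ▸ rfl)
    · simp only [if_neg hx]; exact hx
  set G' := (⊤ : G.Subgraph).deleteVerts {v} with hG'
  have hGverts : G'.verts = Set.univ \ {v} := by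
    simp [hG', SimpleGraph.Subgraph.deleteVerts_verts]
  have hne : G' ≠ ⊤ := by
    intro h
    have hvmem : v ∈ G'.verts := by rw [h]; simp
    rw [hGverts] at hvmem
    simp at hvmem
  have hnr := hmin.2 G' hne
  unfold IsRamseyFor at hnr
  push_neg at hnr
  obtain ⟨c', hc'⟩ := hnr
  have hu₀mem : (if x = v then y else x) ∈ G'.verts := by
    rw [hGverts]; simp [hu₀]
  set u₀ : ↥G'.verts := ⟨_, hu₀mem⟩ with hu₀def
  set ρ : V → ↥G'.verts := fun z =>
    if h : z = v then u₀ else ⟨z, by rw [hGverts]; simp [h]⟩ with hρ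
  have hρval : ∀ z (h : z ≠ v), (ρ z : V) = z := by
    intro z h; rw [hρ]; simp [h]
  -- Fintype / embedding for neighbours
  haveI : Fintype ↥N := (Set.toFinite N).fintype
  have hNc2 : Fintype.card ↥N ≤ Fintype.card (Fin (q * d)) := by
    rw [Fintype.card_fin]
    rw [← Nat.card_eq_fintype_card, Nat.card_coe_set_eq]
    exact hNcard
  obtain ⟨ι⟩ := Function.Embedding.nonempty_of_card_le hNc2
  have hdiv : ∀ k : Fin (q * d), (k : ℕ) / d < q := by
    intro k
    rcases Nat.eq_zero_or_pos d with hd0 | hd0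
    · exact absurd (lt_of_lt_of_eq k.isLt (by rw [hd0, Nat.mul_zero])) (Nat.not_lt_zero _)
    · exact (Nat.div_lt_iff_lt_mul hd0).mpr k.isLt
  set p : V → Fin q := fun u =>
    if h : u ∈ N then ⟨((ι ⟨u, h⟩ : Fin (q * d)) : ℕ) / d, hdiv _⟩ else ⟨0, hq0⟩ with hp
  clear_value p
  -- the coloring
  have hsym : ∀ a b : V,
      (if a = v then p b else if b = v then p a else c' s(ρ a, ρ b)) =
      (if b = v then p a else if a = v then p b else c' s(ρ b, ρ a)) := by
    intro a b
    by_cases h1 : a = v <;> by_cases h2 : b = v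
    · subst h1; subst h2; simp
    · simp [h1, h2]
    · simp [h1, h2]
    · simp only [if_neg h1, if_neg h2]
      rw [Sym2.eq_swap]
  set c : Sym2 V → Fin q := Sym2.lift ⟨fun a b =>
    if a = v then p b else if b = v then p a else c' s(ρ a, ρ b), hsym⟩ with hc
  have hcvx : ∀ z : V, c s(v, z) = p z := by
    intro z; rw [hc, Sym2.lift_mk]; simp
  have hcother : ∀ z₁ z₂ : V, z₁ ≠ v → z₂ ≠ v → c s(z₁, z₂) = c' s(ρ z₁, ρ z₂) := by
    intro z₁ z₂ h1 h2; rw [hc, Sym2.lift_mk]; simp [h1, h2]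
  -- c is H-free on G
  have hfree : IsHFree H G c := by
    intro i hcont
    obtain ⟨f, finj, hf⟩ := hcont
    by_cases hvv : ∃ w : W, f w = v
    · -- copy uses v : count colors at v
      obtain ⟨w, hw⟩ := hvv
      have key : ∀ w' : W, H.Adj w w' → f w' ∈ N ∧ p (f w') = i := by
        intro w' hww'
        obtain ⟨hmem, hcol⟩ := hf w w' hww'
        rw [hw] at hmem hcol
        rw [SimpleGraph.mem_edgeSet] at hmem
        refine ⟨hmem, ?_⟩
        rw [← hcvx (f w')]
        exact hcol
      have h1 : MinDegOf H ≤ (H.neighborSet w).ncard := Nat.sInf_le ⟨w, rfl⟩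
      have h2 : (H.neighborSet w).ncard ≤ {u : V | u ∈ N ∧ p u = i}.ncard := by
        apply Set.ncard_le_ncard_of_injOn f
        · intro w' hw'
          exact key w' hw'
        · exact finj.injOn
      have h3 : {u : V | u ∈ N ∧ p u = i}.ncard ≤ d := by
        have hstep : {u : V | u ∈ N ∧ p u = i}.ncard ≤ (↑(Finset.range d) : Set ℕ).ncard := by
          apply Set.ncard_le_ncard_of_injOn
            (fun u => if h : u ∈ N then ((ι ⟨u, h⟩ : Fin (q * d)) : ℕ) % d else 0)
          · intro u hu
            obtain ⟨huN, hup⟩ := hu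
            simp only [dif_pos huN, Finset.coe_range, Set.mem_Iio]
            have hlt := (ι ⟨u, huN⟩).isLt
            rcases Nat.eq_zero_or_pos d with hd0 | hd0
            · exact absurd (lt_of_lt_of_eq hlt (by rw [hd0, Nat.mul_zero])) (Nat.not_lt_zero _)
            · exact Nat.mod_lt _ hd0
          · intro u₁ hu₁ u₂ hu₂ heq
            obtain ⟨h₁N, h₁p⟩ := hu₁
            obtain ⟨h₂N, h₂p⟩ := hu₂
            simp only [dif_pos h₁N, dif_pos h₂N] at heq
            rw [hp] at h₁p h₂p
            simp only [dif_pos h₁N] at h₁p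
            simp only [dif_pos h₂N] at h₂p
            have e₁ : ((ι ⟨u₁, h₁N⟩ : Fin (q * d)) : ℕ) / d = (i : ℕ) := by
              have := congrArg Fin.val h₁p; simpa using this
            have e₂ : ((ι ⟨u₂, h₂N⟩ : Fin (q * d)) : ℕ) / d = (i : ℕ) := by
              have := congrArg Fin.val h₂p; simpa using this
            have hvals : ((ι ⟨u₁, h₁N⟩ : Fin (q * d)) : ℕ) = ((ι ⟨u₂, h₂N⟩ : Fin (q * d)) : ℕ) := by
              have hh₁ := Nat.div_add_mod ((ι ⟨u₁, h₁N⟩ : Fin (q * d)) : ℕ) d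
              have hh₂ := Nat.div_add_mod ((ι ⟨u₂, h₂N⟩ : Fin (q * d)) : ℕ) d
              rw [e₁] at hh₁; rw [e₂] at hh₂
              omega
            have := ι.injective (Fin.ext hvals)
            exact congrArg Subtype.val this
        rwa [Set.ncard_coe_finset, Finset.card_range] at hstep
      omega
    · -- copy avoids v : contradicts H-freeness of c'
      push_neg at hvv
      apply hc' i
      refine ⟨fun w => ⟨f w, by rw [hGverts]; simp [hvv w]⟩, ?_, ?_⟩
      · intro a b h
        exact finj (congrArg Subtype.val h)
      · intro a b hab
        obtain ⟨hmem, hcol⟩ := hf a b hab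
        rw [SimpleGraph.mem_edgeSet] at hmem
        constructor
        · rw [SimpleGraph.mem_edgeSet]
          simp only [SimpleGraph.Subgraph.coe_adj, hG',
            SimpleGraph.Subgraph.deleteVerts_adj]
          simp [hvv a, hvv b, hmem]
        · have heval := hcother (f a) (f b) (hvv a) (hvv b)
          have hρa : ρ (f a) = ⟨f a, by rw [hGverts]; simp [hvv a]⟩ := by
            rw [hρ]; simp [hvv a]
          have hρb : ρ (f b) = ⟨f b, by rw [hGverts]; simp [hvv b]⟩ := by
            rw [hρ]; simp [hvv b]
          rw [hρa, hρb] at heval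
          rw [← heval]
          exact hcol
  exact hmin.1 c hfree

/-- For `q ≥ 2` and a graph `H` with no isolated vertices and at least one
edge, every minimal `q`-Ramsey graph `G` for `H` satisfies `δ(G) ≥ q(δ(H) - 1) + 1`;
in particular `s_q(H) ≥ q(δ(H) - 1) + 1`. -/
theorem min_degree_lower_bound (q : ℕ) (hq : 2 ≤ q)
    {W : Type} [Fintype W] (H : SimpleGraph W)
    (hIso : ∀ w : W, 0 < DegOf H w) (hEdge : H.edgeSet.Nonempty) :
    (∀ (V : Type) [Fintype V] (G : SimpleGraph V), IsMinRamseyFor q H G →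
      q * (MinDegOf H - 1) + 1 ≤ MinDegOf G) ∧
    q * (MinDegOf H - 1) + 1 ≤ sRamsey q H := by
  constructor
  · intro V _ G hmin
    exact deg_bound q hq H hIso hEdge G hmin
  · have hne : {d | ∃ (n : ℕ) (G : SimpleGraph (Fin n)),
        IsMinRamseyFor q H G ∧ MinDegOf G = d}.Nonempty := by
      obtain ⟨n, G, hG⟩ := exists_min_ramsey q (by omega) H
      exact ⟨MinDegOf G, n, G, hG, rfl⟩
    obtain ⟨n', G', hG', hEq⟩ := Nat.sInf_mem hne
    calc q * (MinDegOf H - 1) + 1 ≤ MinDegOf G' := deg_bound q hq H hIso hEdge G' hG'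
      _ = sRamsey q H := hEq
end
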